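/- Suppose Σ_{i=1}^n x_i² ≍ n. If β_n ≍ 1/√n (i.e., β_n√n is bounded above and below by positive constants for large n), then the L1 distance ‖P_{n,0} − P_{n,β_n}‖ is eventually bounded away from 0 and from 2. -/

import Mathlib

open MeasureTheory Filter Real ProbabilityTheory

lemma gaussian_mul_eq_sq (m y : ℝ) :
    gaussianPDFReal 0 1 y * gaussianPDFReal m 1 y
      = (Real.exp (-(m ^ 2) / 8) * gaussianPDFReal (m / 2) 1 y) ^ 2 := by
  simp only [gaussianPDFReal, NNReal.coe_one, mul_one, sub_zero]
  have main : ∀ (s a b c d : ℝ), a + b = c + c + (d + d) →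
      s * rexp a * (s * rexp b) = (rexp c * (s * rexp d)) ^ 2 := by
    intro s a b c d h
    rw [mul_pow, mul_pow, sq (rexp c), sq (rexp d), sq s, ← Real.exp_add, ← Real.exp_add,
      show s * rexp a * (s * rexp b) = s * s * (rexp a * rexp b) from by ring,
      ← Real.exp_add, h]
    rw [show c + c + (d + d) = (c+c) + (d+d) from by ring, Real.exp_add]
    ring
  exact main _ _ _ _ _ (by ring)

lemma hellinger_bounds (n : ℕ) (m : Fin n → ℝ) :
    2 - 2 * Real.exp (-(∑ i : Fin n, (m i) ^ 2) / 8) ≤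
      (∫ y : Fin n → ℝ, |(∏ i : Fin n, gaussianPDFReal 0 1 (y i)) -
        ∏ i : Fin n, gaussianPDFReal (m i) 1 (y i)| ∂(Measure.pi fun _ => volume)) ∧
    (∫ y : Fin n → ℝ, |(∏ i : Fin n, gaussianPDFReal 0 1 (y i)) -
        ∏ i : Fin n, gaussianPDFReal (m i) 1 (y i)| ∂(Measure.pi fun _ => volume)) ≤
      2 - Real.exp (-(∑ i : Fin n, (m i) ^ 2) / 8) ^ 2 := by
  rw [← volume_pi]
  set A : ℝ := Real.exp (-(∑ i : Fin n, (m i) ^ 2) / 8) with hA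
  set f : (Fin n → ℝ) → ℝ := fun y => ∏ i : Fin n, gaussianPDFReal 0 1 (y i) with hf
  set g : (Fin n → ℝ) → ℝ := fun y => ∏ i : Fin n, gaussianPDFReal (m i) 1 (y i) with hg
  set h : (Fin n → ℝ) → ℝ := fun y => ∏ i : Fin n, gaussianPDFReal (m i / 2) 1 (y i) with hh
  have hA_pos : 0 < A := Real.exp_pos _
  -- nonnegativity
  have hf_nn : ∀ y, 0 ≤ f y := fun y =>
    Finset.prod_nonneg fun i _ => gaussianPDFReal_nonneg _ _ _
  have hg_nn : ∀ y, 0 ≤ g y := fun y =>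
    Finset.prod_nonneg fun i _ => gaussianPDFReal_nonneg _ _ _
  have hh_nn : ∀ y, 0 ≤ h y := fun y =>
    Finset.prod_nonneg fun i _ => gaussianPDFReal_nonneg _ _ _
  -- measurability
  have hf_m : Measurable f := Finset.measurable_prod _ fun i _ =>
    (measurable_gaussianPDFReal _ _).comp (measurable_pi_apply i)
  have hg_m : Measurable g := Finset.measurable_prod _ fun i _ =>
    (measurable_gaussianPDFReal _ _).comp (measurable_pi_apply i)
  -- integrability
  have hf_int : Integrable f := Integrable.fintype_prod fun i => integrable_gaussianPDFReal _ _
  have hg_int : Integrable g := Integrable.fintype_prod fun i => integrable_gaussianPDFReal _ _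
  have hh_int : Integrable h := Integrable.fintype_prod fun i => integrable_gaussianPDFReal _ _
  -- integrals equal one
  have hf_one : ∫ y, f y = 1 := by
    simp only [hf, volume_pi]
    rw [integral_fintype_prod_eq_prod (f := fun (_ : Fin n) => gaussianPDFReal 0 1)]
    simp [integral_gaussianPDFReal_eq_one 0 one_ne_zero]
  have hg_one : ∫ y, g y = 1 := by
    simp only [hg, volume_pi]
    rw [integral_fintype_prod_eq_prod (f := fun (i : Fin n) => gaussianPDFReal (m i) 1)]
    simp [fun i : Fin n => integral_gaussianPDFReal_eq_one (m i) one_ne_zero]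
  have hh_one : ∫ y, h y = 1 := by
    simp only [hh, volume_pi]
    rw [integral_fintype_prod_eq_prod (f := fun (i : Fin n) => gaussianPDFReal (m i / 2) 1)]
    simp [fun i : Fin n => integral_gaussianPDFReal_eq_one (m i / 2) one_ne_zero]
  -- the product identity
  have hfg : ∀ y, f y * g y = (A * h y) ^ 2 := by
    intro y
    rw [hf, hg, hh, ← Finset.prod_mul_distrib]
    simp_rw [gaussian_mul_eq_sq]
    rw [Finset.prod_pow]
    congr 1
    rw [Finset.prod_mul_distrib, ← Real.exp_sum]
    congr 2
    rw [← Finset.sum_div]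
    rw [← Finset.sum_neg_distrib]
  have hsqrt : ∀ y, Real.sqrt (f y * g y) = A * h y := by
    intro y
    rw [hfg y, Real.sqrt_sq (mul_nonneg hA_pos.le (hh_nn y))]
  -- min and max
  have hmin_m : Measurable fun y => min (f y) (g y) := hf_m.min hg_m
  have hmax_m : Measurable fun y => max (f y) (g y) := hf_m.max hg_m
  have hmin_int : Integrable (fun y => min (f y) (g y)) := by
    refine hf_int.mono hmin_m.aestronglyMeasurable (ae_of_all _ fun y => ?_)
    rw [Real.norm_of_nonneg (le_min (hf_nn y) (hg_nn y)), Real.norm_of_nonneg (hf_nn y)]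
    exact min_le_left _ _
  have hadd_int : Integrable (fun y => f y + g y) := hf_int.add hg_int
  have hmax_int : Integrable (fun y => max (f y) (g y)) := by
    refine hadd_int.mono hmax_m.aestronglyMeasurable (ae_of_all _ fun y => ?_)
    rw [Real.norm_of_nonneg (le_max_of_le_left (hf_nn y)),
      Real.norm_of_nonneg (add_nonneg (hf_nn y) (hg_nn y))]
    exact max_le (le_add_of_nonneg_right (hg_nn y)) (le_add_of_nonneg_left (hf_nn y))
  set I : ℝ := ∫ y, min (f y) (g y) with hI
  have hI_nn : 0 ≤ I := integral_nonneg fun y => le_min (hf_nn y) (hg_nn y)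
  -- L = 2 - 2I
  have habs : ∀ y, |f y - g y| = f y + g y - 2 * min (f y) (g y) := by
    intro y
    rcases le_total (f y) (g y) with hle | hle
    · rw [min_eq_left hle, abs_of_nonpos (by linarith)]; ring
    · rw [min_eq_right hle, abs_of_nonneg (by linarith)]; ring
  have hL : (∫ y, |f y - g y|) = 2 - 2 * I := by
    calc (∫ y, |f y - g y|) = ∫ y, (f y + g y - 2 * min (f y) (g y)) :=
          integral_congr_ae (ae_of_all _ fun y => habs y)
      _ = (∫ y, (f y + g y)) - ∫ y, 2 * min (f y) (g y) :=
          integral_sub hadd_int (hmin_int.const_mul 2)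
      _ = 2 - 2 * I := by
          rw [integral_add hf_int hg_int, hf_one, hg_one, integral_const_mul]
          norm_num
          rfl
  -- I ≤ A
  have hIA : I ≤ A := by
    have hmono : ∀ y, min (f y) (g y) ≤ A * h y := by
      intro y
      rw [← hsqrt y]
      refine (Real.le_sqrt (le_min (hf_nn y) (hg_nn y))
        (mul_nonneg (hf_nn y) (hg_nn y))).mpr ?_
      rw [sq]
      exact mul_le_mul (min_le_left _ _) (min_le_right _ _)
        (le_min (hf_nn y) (hg_nn y)) (hf_nn y)
    calc I ≤ ∫ y, A * h y := integral_mono hmin_int (hh_int.const_mul A) hmono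
      _ = A := by rw [integral_const_mul, hh_one, mul_one]
  -- A^2 ≤ 2 I  via Cauchy-Schwarz
  have hCS : A ^ 2 ≤ 2 * I := by
    have h22 : Real.HolderConjugate 2 2 := Real.HolderConjugate.two_two
    have hmem_min : MemLp (fun y => Real.sqrt (min (f y) (g y))) (ENNReal.ofReal 2) := by
      rw [show ENNReal.ofReal 2 = 2 by norm_num]
      refine (memLp_two_iff_integrable_sq
        (hmin_m.sqrt.aestronglyMeasurable)).mpr ?_
      refine hmin_int.congr (ae_of_all _ fun y => ?_)
      beta_reduce
      rw [Real.sq_sqrt (le_min (hf_nn y) (hg_nn y))]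
    have hmem_max : MemLp (fun y => Real.sqrt (max (f y) (g y))) (ENNReal.ofReal 2) := by
      rw [show ENNReal.ofReal 2 = 2 by norm_num]
      refine (memLp_two_iff_integrable_sq
        (hmax_m.sqrt.aestronglyMeasurable)).mpr ?_
      refine hmax_int.congr (ae_of_all _ fun y => ?_)
      beta_reduce
      rw [Real.sq_sqrt (le_max_of_le_left (hf_nn y))]
    have hA_eq : A = ∫ y, Real.sqrt (min (f y) (g y)) * Real.sqrt (max (f y) (g y)) := by
      rw [show (∫ y, Real.sqrt (min (f y) (g y)) * Real.sqrt (max (f y) (g y)))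
          = ∫ y, A * h y from integral_congr_ae (ae_of_all _ fun y => by
            beta_reduce
            rw [← Real.sqrt_mul (le_min (hf_nn y) (hg_nn y)), min_mul_max, hsqrt y]),
        integral_const_mul, hh_one, mul_one]
    have hHolder := integral_mul_le_Lp_mul_Lq_of_nonneg h22
      (ae_of_all _ fun y => Real.sqrt_nonneg _) (ae_of_all _ fun y => Real.sqrt_nonneg _)
      hmem_min hmem_max
    have hsq_min : (∫ y, Real.sqrt (min (f y) (g y)) ^ (2:ℝ)) = I := by
      refine integral_congr_ae (ae_of_all _ fun y => ?_)
      beta_reduce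
      rw [Real.rpow_two, Real.sq_sqrt (le_min (hf_nn y) (hg_nn y))]
    have hsq_max : (∫ y, Real.sqrt (max (f y) (g y)) ^ (2:ℝ)) = 2 - I := by
      have : (∫ y, Real.sqrt (max (f y) (g y)) ^ (2:ℝ)) = ∫ y, max (f y) (g y) := by
        refine integral_congr_ae (ae_of_all _ fun y => ?_)
        beta_reduce
        rw [Real.rpow_two, Real.sq_sqrt (le_max_of_le_left (hf_nn y))]
      rw [this]
      have hmm : ∀ y, max (f y) (g y) = f y + g y - min (f y) (g y) := fun y => by
        rcases le_total (f y) (g y) with hle | hle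
        · rw [min_eq_left hle, max_eq_right hle]; ring
        · rw [min_eq_right hle, max_eq_left hle]; ring
      calc (∫ y, max (f y) (g y)) = ∫ y, (f y + g y - min (f y) (g y)) :=
            integral_congr_ae (ae_of_all _ fun y => hmm y)
        _ = (∫ y, (f y + g y)) - ∫ y, min (f y) (g y) :=
            integral_sub hadd_int hmin_int
        _ = 2 - I := by
            rw [integral_add hf_int hg_int, hf_one, hg_one, ← hI]
            norm_num
    rw [hsq_min, hsq_max] at hHolder
    rw [← hA_eq] at hHolder
    -- A ≤ I^(1/2) * (2-I)^(1/2)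
    have h2I : 2 - I ≤ 2 := by linarith
    have hrw : I ^ (1/(2:ℝ)) = Real.sqrt I := (Real.sqrt_eq_rpow I).symm
    have hrw2 : (2 - I) ^ (1/(2:ℝ)) = Real.sqrt (2 - I) := (Real.sqrt_eq_rpow _).symm
    rw [hrw, hrw2] at hHolder
    have h1 : Real.sqrt I * Real.sqrt (2 - I) = Real.sqrt (I * (2 - I)) :=
      (Real.sqrt_mul hI_nn _).symm
    rw [h1] at hHolder
    have hI_le_one : I ≤ 1 := by
      have := integral_mono hmin_int hf_int (fun y => min_le_left (f y) (g y))
      rw [hf_one] at this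
      exact le_of_eq_of_le hI this
    have hnn : (0:ℝ) ≤ I * (2 - I) := by nlinarith
    have h2 : A ^ 2 ≤ I * (2 - I) := by
      have hsq := Real.sq_sqrt hnn
      nlinarith [Real.sqrt_nonneg (I * (2 - I))]
    nlinarith
  constructor
  · rw [hL]; linarith
  · rw [hL]; linarith

theorem stmt_10 (x : ℕ → ℝ)
    (hS : ∃ r R : ℝ, 0 < r ∧ r < R ∧ ∃ n₀ : ℕ, ∀ n > n₀,
      r < (∑ i ∈ Finset.range n, (x i) ^ 2) / n ∧
      (∑ i ∈ Finset.range n, (x i) ^ 2) / n < R)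
    (β : ℕ → ℝ)
    (hβ : ∃ r R : ℝ, 0 < r ∧ r < R ∧ ∃ n₀ : ℕ, ∀ n > n₀,
      r < β n * Real.sqrt n ∧ β n * Real.sqrt n < R) :
    ∃ a b : ℝ, 0 < a ∧ b < 2 ∧ ∃ n₁ : ℕ, ∀ n > n₁,
      a ≤ (∫ y : Fin n → ℝ,
          |(∏ i : Fin n, gaussianPDFReal 0 1 (y i)) -
            ∏ i : Fin n, gaussianPDFReal (β n * x i.val) 1 (y i)|
          ∂(Measure.pi fun _ => volume)) ∧
      (∫ y : Fin n → ℝ,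
          |(∏ i : Fin n, gaussianPDFReal 0 1 (y i)) -
            ∏ i : Fin n, gaussianPDFReal (β n * x i.val) 1 (y i)|
          ∂(Measure.pi fun _ => volume)) ≤ b := by
  obtain ⟨rS, RS, hrS, hrRS, nS, hnS⟩ := hS
  obtain ⟨rβ, Rβ, hrβ, hrRβ, nβ, hnβ⟩ := hβ
  set s₁ : ℝ := rβ ^ 2 * rS with hs₁
  set s₂ : ℝ := Rβ ^ 2 * RS with hs₂
  have hs₁_pos : 0 < s₁ := by positivity
  have hs₂_pos : 0 < s₂ := by
    have : 0 < Rβ := lt_trans hrβ hrRβ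
    have : 0 < RS := lt_trans hrS hrRS
    positivity
  refine ⟨2 - 2 * Real.exp (-s₁ / 8), 2 - Real.exp (-s₂ / 8) ^ 2, ?_, ?_, max nS nβ, ?_⟩
  · have : Real.exp (-s₁ / 8) < 1 := by
      rw [Real.exp_lt_one_iff]
      linarith
    linarith
  · nlinarith [Real.exp_pos (-s₂ / 8), sq_nonneg (Real.exp (-s₂ / 8))]
  · intro n hn
    have hnS' := hnS n (lt_of_le_of_lt (le_max_left _ _) hn)
    have hnβ' := hnβ n (lt_of_le_of_lt (le_max_right _ _) hn)
    have hn_pos : 0 < (n : ℝ) := by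
      have : 0 < n := lt_of_le_of_lt (Nat.zero_le _) hn
      exact_mod_cast this
    set T : ℝ := ∑ i ∈ Finset.range n, (x i) ^ 2 with hT
    set S : ℝ := ∑ i : Fin n, (β n * x i.val) ^ 2 with hSdef
    have hS_eq : S = (β n * Real.sqrt n) ^ 2 * (T / n) := by
      rw [hSdef, hT]
      rw [Fin.sum_univ_eq_sum_range (fun i => (β n * x i) ^ 2) n]
      simp_rw [mul_pow]
      rw [← Finset.mul_sum, Real.sq_sqrt hn_pos.le]
      field_simp
    have hTn_pos : 0 < T / n := lt_trans hrS hnS'.1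
    have hβn_pos : 0 < β n * Real.sqrt n := lt_trans hrβ hnβ'.1
    have hS_lb : s₁ < S := by
      rw [hS_eq, hs₁]
      exact mul_lt_mul'' (pow_lt_pow_left₀ hnβ'.1 hrβ.le two_ne_zero) hnS'.1
        (by positivity) hrS.le
    have hS_ub : S < s₂ := by
      rw [hS_eq, hs₂]
      exact mul_lt_mul'' (pow_lt_pow_left₀ hnβ'.2 hβn_pos.le two_ne_zero) hnS'.2
        (by positivity) hTn_pos.le
    have hbounds := hellinger_bounds n (fun i => β n * x i.val)
    rw [← hSdef] at hbounds
    have hexp1 : Real.exp (-S / 8) < Real.exp (-s₁ / 8) :=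
      Real.exp_lt_exp.mpr (by linarith)
    have hexp2 : Real.exp (-s₂ / 8) < Real.exp (-S / 8) :=
      Real.exp_lt_exp.mpr (by linarith)
    have hexp2' : Real.exp (-s₂ / 8) ^ 2 < Real.exp (-S / 8) ^ 2 :=
      pow_lt_pow_left₀ hexp2 (Real.exp_pos _).le two_ne_zero
    constructor
    · linarith [hbounds.1]
    · linarith [hbounds.2]
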